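/- Let G be a CUH graph and let H be a minimally omitted subgraph of G that is not monochromatic. For a color c ∈ {red, blue}, let H_c be the subgraph of H induced by the vertices of color c. Then for each color c one of the following holds: (i) H_c is a complete graph on n ≥ 3 vertices and the vertices of H_c are pairwise twins in H; (ii) H_c is a complete graph on 2 vertices; or (iii) H_c is an edgeless graph on n ≥ 1 vertices. -/
import Mathlib


open SimpleGraph

/-- A partial colored isomorphism of the 2-colored graph `(G, red)`, defined on the set `S`:
an injective map preserving colors and adjacency on `S`. -/
def IsPartialIso {V : Type} (G : SimpleGraph V) (red : V → Prop) (S : Set V) (f : V → V) :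
    Prop :=
  Set.InjOn f S ∧ (∀ v ∈ S, (red (f v) ↔ red v)) ∧
    ∀ u ∈ S, ∀ v ∈ S, (G.Adj (f u) (f v) ↔ G.Adj u v)

/-- A 2-colored graph is ultrahomogeneous if every isomorphism between two finite induced
colored subgraphs extends to a color-preserving automorphism. -/
def Ultrahomogeneous {V : Type} (G : SimpleGraph V) (red : V → Prop) : Prop :=
  ∀ S : Set V, S.Finite → ∀ f : V → V, IsPartialIso G red S f →
    ∃ ψ : G ≃g G, (∀ v, red (ψ v) ↔ red v) ∧ ∀ v ∈ S, ψ v = f v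

/-- The set `P` induces a disjoint union of cliques in `G` (no induced monochromatic `P₃`). -/
def IsUnionOfCliques {V : Type} (G : SimpleGraph V) (P : Set V) : Prop :=
  ∀ u ∈ P, ∀ v ∈ P, ∀ w ∈ P, G.Adj u v → G.Adj v w → u ≠ w → G.Adj u w

/-- `M` is an inclusion-wise maximal clique of the subgraph of `G` induced on `P`. -/
def IsMaxCliqueIn {V : Type} (G : SimpleGraph V) (P : Set V) (M : Set V) : Prop :=
  M ⊆ P ∧ G.IsClique M ∧ ∀ M' : Set V, M' ⊆ P → G.IsClique M' → M ⊆ M' → M = M'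

/-- `S` is an independent set in `G`. -/
def IsIndepIn {V : Type} (G : SimpleGraph V) (S : Set V) : Prop :=
  ∀ u ∈ S, ∀ v ∈ S, ¬ G.Adj u v

/-- The 2-colored graph `(H, redH)` is realized in `(G, red)`, i.e. isomorphic to an
induced colored subgraph of `G`. -/
def Realizes {V : Type} (G : SimpleGraph V) (red : V → Prop) {W : Type} (H : SimpleGraph W)
    (redH : W → Prop) : Prop :=
  ∃ f : W → V, Function.Injective f ∧ (∀ w, red (f w) ↔ redH w) ∧
    ∀ u w : W, G.Adj (f u) (f w) ↔ H.Adj u w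

/-- `(H, redH)` is minimally omitted in `(G, red)`: it is omitted, but every proper induced
subgraph of it is realized. -/
def MinOmitted {V : Type} (G : SimpleGraph V) (red : V → Prop) {W : Type} (H : SimpleGraph W)
    (redH : W → Prop) : Prop :=
  ¬ Realizes G red H redH ∧
    ∀ S : Set W, S ≠ Set.univ → Realizes G red (H.induce S) (fun x => redH x.1)

/-- Isomorphism of 2-colored graphs. -/
def ColoredIso {V : Type} (G : SimpleGraph V) (red : V → Prop) {W : Type} (H : SimpleGraph W)
    (redH : W → Prop) : Prop :=
  ∃ e : G ≃g H, ∀ v, red v ↔ redH (e v)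

/-- The graph obtained from `G` by complementing the cross edges while keeping the
edges inside each color class. -/
def crossComp {V : Type} (G : SimpleGraph V) (red : V → Prop) : SimpleGraph V :=
  SimpleGraph.fromRel (fun u v =>
    ((red u ↔ red v) ∧ G.Adj u v) ∨ (¬ (red u ↔ red v) ∧ ¬ G.Adj u v))

/-- The blow-up of the 2-colored graph `(H, redH)` (whose red class should be independent),
replacing every red vertex by a copy of `I` forming a clique, joined to the neighbors of the
original vertex. -/
def blowUp {V : Type} (H : SimpleGraph V) (redH : V → Prop) (I : Type) :
    SimpleGraph ({v : V // redH v} × I ⊕ {v : V // ¬ redH v}) :=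
  SimpleGraph.fromRel (fun x y =>
    match x, y with
    | Sum.inl (u, i), Sum.inl (u', i') => H.Adj u.1 u'.1 ∨ (u = u' ∧ i ≠ i')
    | Sum.inl (u, _), Sum.inr b => H.Adj u.1 b.1
    | Sum.inr b, Sum.inl (u, _) => H.Adj b.1 u.1
    | Sum.inr b, Sum.inr b' => H.Adj b.1 b'.1)

/-- The coloring of the blow-up: all vertices replacing red vertices are red. -/
def blowUpRed (V : Type) (redH : V → Prop) (I : Type) :
    ({v : V // redH v} × I ⊕ {v : V // ¬ redH v}) → Prop :=
  Sum.elim (fun _ => True) (fun _ => False)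

/-- `(G, red)` is a blow-up with the red class blown up: it is isomorphic (as a colored graph)
to the blow-up of some `(H, redH)` with independent red class by an `i`-clique, `2 ≤ i ≤ ℵ₀`. -/
def IsBlowUpOf {V : Type} (G : SimpleGraph V) (red : V → Prop) : Prop :=
  ∃ (U : Type) (H : SimpleGraph U) (redH : U → Prop) (I : Type),
    (∀ u v : U, redH u → redH v → ¬ H.Adj u v) ∧
    2 ≤ Cardinal.mk I ∧ Cardinal.mk I ≤ Cardinal.aleph0 ∧
    ∃ e : G ≃g blowUp H redH I, ∀ v, red v ↔ blowUpRed U redH I (e v)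

/-- `(G, red)` is a blow-up (of one of its two color classes). -/
def IsBlowUp {V : Type} (G : SimpleGraph V) (red : V → Prop) : Prop :=
  IsBlowUpOf G red ∨ IsBlowUpOf G (fun v => ¬ red v)

/-- A CUH graph: a countably infinite ultrahomogeneous 2-colored graph in which both
color classes induce disjoint unions of cliques. -/
def IsCUH {V : Type} (G : SimpleGraph V) (red : V → Prop) : Prop :=
  Countable V ∧ Infinite V ∧ Ultrahomogeneous G red ∧
    IsUnionOfCliques G {v | red v} ∧ IsUnionOfCliques G {v | ¬ red v}

/-- A basic CUH graph: a CUH graph which is not a blow-up and where both independence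
numbers are at least 2. -/
def IsBasicCUH {V : Type} (G : SimpleGraph V) (red : V → Prop) : Prop :=
  IsCUH G red ∧ ¬ IsBlowUp G red ∧
    (∃ u v, red u ∧ red v ∧ u ≠ v ∧ ¬ G.Adj u v) ∧
    (∃ u v, ¬ red u ∧ ¬ red v ∧ u ≠ v ∧ ¬ G.Adj u v)

/-- The graph `D`: red vertices `0, 1`, blue vertices `2, 3`, edges
`{01, 23, 02, 03, 12}` (a 2-colored diamond). -/
def Dgraph : SimpleGraph (Fin 4) :=
  SimpleGraph.fromRel (fun x y =>
    (x = 0 ∧ y = 1) ∨ (x = 2 ∧ y = 3) ∨ (x = 0 ∧ y = 2) ∨ (x = 0 ∧ y = 3) ∨ (x = 1 ∧ y = 2))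

/-- The coloring of `D` and `D̃`: `0, 1` are red, `2, 3` are blue. -/
def Dred : Fin 4 → Prop := fun x => x = 0 ∨ x = 1

/-- The graph `D̃`, the cross-edge complement of `D`: the path `0 – 1 – 3 – 2`. -/
def Dtilde : SimpleGraph (Fin 4) :=
  SimpleGraph.fromRel (fun x y => (x = 0 ∧ y = 1) ∨ (x = 1 ∧ y = 3) ∨ (x = 3 ∧ y = 2))

/-- `T_r`: the triangle with two red vertices and one blue vertex. -/
def Tr : SimpleGraph (Fin 3) := ⊤

/-- The coloring of `T_r` and `T̃_r`: `0, 1` red, `2` blue. -/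
def TrRed : Fin 3 → Prop := fun x => x = 0 ∨ x = 1

/-- `T̃_r`: a red edge together with an isolated blue vertex. -/
def TrTilde : SimpleGraph (Fin 3) := SimpleGraph.fromRel (fun x y => x = 0 ∧ y = 1)

/-- `T_b`: the triangle with one red vertex and two blue vertices. -/
def Tb : SimpleGraph (Fin 3) := ⊤

/-- The coloring of `T_b` and `T̃_b`: `0` red, `1, 2` blue. -/
def TbRed : Fin 3 → Prop := fun x => x = 0

/-- `T̃_b`: a blue edge together with an isolated red vertex. -/
def TbTilde : SimpleGraph (Fin 3) := SimpleGraph.fromRel (fun x y => x = 1 ∧ y = 2)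

/-- The three possible shapes of a color class `C` of a minimally omitted subgraph `H`:
a clique on `n ≥ 3` vertices which are pairwise twins in `H`, a clique on 2 vertices,
or a nonempty independent set. -/
def GoodClass {W : Type} (H : SimpleGraph W) (C : Set W) : Prop :=
  (3 ≤ Nat.card C ∧ (∀ u ∈ C, ∀ v ∈ C, u ≠ v → H.Adj u v) ∧
    ∀ u ∈ C, ∀ v ∈ C, ∀ w : W, w ≠ u → w ≠ v → (H.Adj u w ↔ H.Adj v w)) ∨
  (Nat.card C = 2 ∧ ∀ u ∈ C, ∀ v ∈ C, u ≠ v → H.Adj u v) ∨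
  (C.Nonempty ∧ ∀ u ∈ C, ∀ v ∈ C, ¬ H.Adj u v)

section Aux

variable {V W : Type}

lemma realize_proper (G : SimpleGraph V) (red : V → Prop)
    (H : SimpleGraph W) (redH : W → Prop) (hmin : MinOmitted G red H redH)
    (S : Set W) (hS : S ≠ Set.univ) :
    ∃ f : S → V, Function.Injective f ∧ (∀ w : S, red (f w) ↔ redH w.1) ∧
      ∀ a b : S, G.Adj (f a) (f b) ↔ H.Adj a.1 b.1 := by
  obtain ⟨f, hinj, hcol, hadj⟩ := hmin.2 S hS
  exact ⟨f, hinj, hcol, fun a b => hadj a b⟩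

/-- Amalgamation: an "almost-realization" of `H` which is correct except possibly
on the pair `(u, w)`, where the adjacency is flipped or the two images coincide. -/
lemma amalg [Fintype W] (G : SimpleGraph V) (red : V → Prop)
    (hUH : Ultrahomogeneous G red)
    (H : SimpleGraph W) (redH : W → Prop) (hmin : MinOmitted G red H redH)
    (u w : W) (huw : u ≠ w) :
    ∃ h : W → V, (∀ x, red (h x) ↔ redH x) ∧
      (∀ x y, ¬(x = u ∧ y = w) → ¬(x = w ∧ y = u) →
        (G.Adj (h x) (h y) ↔ H.Adj x y)) ∧
      Set.InjOn h {x | x ≠ u} ∧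
      (h u = h w ∨ (h u ≠ h w ∧ (G.Adj (h u) (h w) ↔ ¬ H.Adj u w))) := by
  classical
  obtain ⟨f₁, hinj₁, hcol₁, hadj₁⟩ :=
    realize_proper G red H redH hmin {x | x ≠ u}
      (by intro h; have := h ▸ Set.mem_univ u; simp at this)
  obtain ⟨f₂, hinj₂, hcol₂, hadj₂⟩ :=
    realize_proper G red H redH hmin {x | x ≠ w}
      (by intro h; have := h ▸ Set.mem_univ w; simp at this)
  set F₁ : W → V := fun x => if h : x ≠ u then f₁ ⟨x, h⟩ else f₁ ⟨w, Ne.symm huw⟩ with hF₁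
  set F₂ : W → V := fun x => if h : x ≠ w then f₂ ⟨x, h⟩ else f₂ ⟨u, huw⟩ with hF₂
  have hF₁eq : ∀ x (hx : x ≠ u), F₁ x = f₁ ⟨x, hx⟩ := by intro x hx; simp [hF₁, hx]
  have hF₂eq : ∀ x (hx : x ≠ w), F₂ x = f₂ ⟨x, hx⟩ := by intro x hx; simp [hF₂, hx]
  have hF₂inj : ∀ x y, x ≠ w → y ≠ w → F₂ x = F₂ y → x = y := by
    intro x y hx hy hxy
    rw [hF₂eq x hx, hF₂eq y hy] at hxy
    exact congrArg Subtype.val (hinj₂ hxy)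
  have hF₁inj : ∀ x y, x ≠ u → y ≠ u → F₁ x = F₁ y → x = y := by
    intro x y hx hy hxy
    rw [hF₁eq x hx, hF₁eq y hy] at hxy
    exact congrArg Subtype.val (hinj₁ hxy)
  -- the partial map sending F₂-images to F₁-images on W \ {u, w}
  set φ : V → V := fun v =>
    if h : ∃ x, x ≠ u ∧ x ≠ w ∧ F₂ x = v then F₁ h.choose else v with hφ
  have hφeq : ∀ x, x ≠ u → x ≠ w → φ (F₂ x) = F₁ x := by
    intro x hxu hxw
    have hex : ∃ y, y ≠ u ∧ y ≠ w ∧ F₂ y = F₂ x := ⟨x, hxu, hxw, rfl⟩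
    have hc := hex.choose_spec
    have : hex.choose = x := hF₂inj _ _ hc.2.1 hxw hc.2.2
    simp only [hφ, dif_pos hex, this]
  set S : Set V := F₂ '' {x | x ≠ u ∧ x ≠ w} with hS
  have hSfin : S.Finite := (Set.toFinite _).image F₂
  have hpi : IsPartialIso G red S φ := by
    refine ⟨?_, ?_, ?_⟩
    · rintro v₁ ⟨a, ⟨hau, haw⟩, rfl⟩ v₂ ⟨b, ⟨hbu, hbw⟩, rfl⟩ hv
      rw [hφeq a hau haw, hφeq b hbu hbw] at hv
      rw [hF₁inj a b hau hbu hv]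
    · rintro v ⟨a, ⟨hau, haw⟩, rfl⟩
      rw [hφeq a hau haw, hF₁eq a hau, hF₂eq a haw]
      exact (hcol₁ ⟨a, hau⟩).trans (hcol₂ ⟨a, haw⟩).symm
    · rintro v₁ ⟨a, ⟨hau, haw⟩, rfl⟩ v₂ ⟨b, ⟨hbu, hbw⟩, rfl⟩
      rw [hφeq a hau haw, hφeq b hbu hbw, hF₁eq a hau, hF₁eq b hbu,
        hF₂eq a haw, hF₂eq b hbw]
      exact (hadj₁ ⟨a, hau⟩ ⟨b, hbu⟩).trans (hadj₂ ⟨a, haw⟩ ⟨b, hbw⟩).symm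
  obtain ⟨ψ, hψcol, hψeq⟩ := hUH S hSfin φ hpi
  have hψF : ∀ x, x ≠ u → x ≠ w → ψ (F₂ x) = F₁ x := by
    intro x hxu hxw
    rw [hψeq _ ⟨x, ⟨hxu, hxw⟩, rfl⟩, hφeq x hxu hxw]
  set h : W → V := fun x => if x = u then ψ (F₂ u) else F₁ x with hh
  have hhu : h u = ψ (F₂ u) := by simp [hh]
  have hhx : ∀ x, x ≠ u → h x = F₁ x := by intro x hx; simp [hh, hx]
  have hcol : ∀ x, red (h x) ↔ redH x := by
    intro x
    by_cases hx : x = u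
    · rw [hx, hhu, hψcol, hF₂eq u huw]
      exact hcol₂ _
    · rw [hhx x hx, hF₁eq x hx]
      exact hcol₁ _
  have hadj : ∀ x y, ¬(x = u ∧ y = w) → ¬(x = w ∧ y = u) →
      (G.Adj (h x) (h y) ↔ H.Adj x y) := by
    intro x y hxy hyx
    by_cases hx : x = u <;> by_cases hy : y = u
    · rw [hx, hy]
      simp [SimpleGraph.irrefl]
    · have hyw : y ≠ w := fun hyw => hxy ⟨hx, hyw⟩
      rw [hx, hhu, hhx y hy, ← hψF y hy hyw, ψ.map_adj_iff, hF₂eq u huw, hF₂eq y hyw]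
      exact hadj₂ _ _
    · have hxw : x ≠ w := fun hxw => hyx ⟨hxw, hy⟩
      rw [hy, hhu, hhx x hx, ← hψF x hx hxw, ψ.map_adj_iff, hF₂eq u huw, hF₂eq x hxw]
      exact hadj₂ _ _
    · rw [hhx x hx, hhx y hy, hF₁eq x hx, hF₁eq y hy]
      exact hadj₁ _ _
  have hinj : Set.InjOn h {x | x ≠ u} := by
    intro x hx y hy hxy
    rw [hhx x hx, hhx y hy] at hxy
    exact hF₁inj x y hx hy hxy
  have hux : ∀ x, x ≠ u → x ≠ w → h u ≠ h x := by
    intro x hxu hxw heq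
    rw [hhu, hhx x hxu, ← hψF x hxu hxw] at heq
    have := hF₂inj u x huw hxw (ψ.injective heq)
    exact hxu this.symm
  refine ⟨h, hcol, hadj, hinj, ?_⟩
  by_cases heq : h u = h w
  · exact Or.inl heq
  · refine Or.inr ⟨heq, ?_⟩
    by_contra hflip
    have hsame : G.Adj (h u) (h w) ↔ H.Adj u w := by tauto
    apply hmin.1
    refine ⟨h, ?_, hcol, ?_⟩
    · intro x y hxy
      by_contra hne
      by_cases hx : x = u <;> by_cases hy : y = u
      · exact hne (hx.trans hy.symm)
      · subst hx
        by_cases hyw : y = w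
        · subst hyw; exact heq hxy
        · exact hux y hy hyw hxy
      · subst hy
        by_cases hxw : x = w
        · subst hxw; exact heq hxy.symm
        · exact hux x hx hxw hxy.symm
      · exact hne (hinj hx hy hxy)
    · intro x y
      by_cases hxy : x = u ∧ y = w
      · rw [hxy.1, hxy.2]; exact hsame
      · by_cases hyx : x = w ∧ y = u
        · rw [hyx.1, hyx.2]
          exact (G.adj_comm _ _).trans (hsame.trans (H.adj_comm u w))
        · exact hadj x y hxy hyx

end Aux

section Aux2
set_option linter.unusedSectionVars false

variable {V W : Type} [Fintype W] {G : SimpleGraph V} {red : V → Prop}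
  {H : SimpleGraph W} {redH : W → Prop}

/-- Color classes of `H` induce unions of cliques (transitivity of adjacency inside a class). -/
lemma class_trans (hG : IsCUH G red) (hmin : MinOmitted G red H redH)
    (u v w : W) (huv : redH u ↔ redH v) (hvw : redH v ↔ redH w)
    (hout : ∃ z, ¬ (redH z ↔ redH u))
    (h1 : H.Adj u v) (h2 : H.Adj v w) (hne : u ≠ w) : H.Adj u w := by
  classical
  obtain ⟨z, hzu⟩ := hout
  have hS : ({u, v, w} : Set W) ≠ Set.univ := by
    intro hS
    have hzmem : z ∈ ({u, v, w} : Set W) := hS ▸ Set.mem_univ z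
    rcases hzmem with rfl | rfl | rfl
    · exact hzu Iff.rfl
    · exact hzu huv.symm
    · exact hzu (huv.trans hvw).symm
  obtain ⟨f, hinj, hcol, hadj⟩ := realize_proper G red H redH hmin _ hS
  have hu : u ∈ ({u, v, w} : Set W) := by simp
  have hv : v ∈ ({u, v, w} : Set W) := by simp
  have hw : w ∈ ({u, v, w} : Set W) := by simp
  set a : ({u, v, w} : Set W) := ⟨u, hu⟩
  set b : ({u, v, w} : Set W) := ⟨v, hv⟩
  set c : ({u, v, w} : Set W) := ⟨w, hw⟩
  have A1 : G.Adj (f a) (f b) := (hadj a b).mpr h1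
  have A2 : G.Adj (f b) (f c) := (hadj b c).mpr h2
  have hac : f a ≠ f c := fun h => hne (congrArg Subtype.val (hinj h))
  have goal : G.Adj (f a) (f c) := by
    by_cases hr : redH u
    · have ha : red (f a) := (hcol a).mpr hr
      have hb : red (f b) := (hcol b).mpr (huv.mp hr)
      have hc : red (f c) := (hcol c).mpr (hvw.mp (huv.mp hr))
      exact hG.2.2.2.1 (f a) ha (f b) hb (f c) hc A1 A2 hac
    · have ha : ¬ red (f a) := fun h => hr ((hcol a).mp h)
      have hb : ¬ red (f b) := fun h => hr (huv.mpr ((hcol b).mp h))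
      have hc : ¬ red (f c) := fun h => hr (huv.mpr (hvw.mpr ((hcol c).mp h)))
      exact hG.2.2.2.2 (f a) ha (f b) hb (f c) hc A1 A2 hac
  exact (hadj a c).mp goal

/-- A same-colored edge `uv` plus a same-colored vertex `w` non-adjacent to both is
impossible in a minimally omitted `H`. -/
lemma no_edge_plus_point (hG : IsCUH G red) (hmin : MinOmitted G red H redH)
    (u v w : W) (huv : redH u ↔ redH v) (huw : redH u ↔ redH w)
    (hA : H.Adj u v) (hnuw : ¬ H.Adj u w) (hnvw : ¬ H.Adj v w) : False := by
  have hvu : v ≠ u := fun h => H.irrefl (h ▸ hA)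
  have huw' : u ≠ w := fun h => hnvw (h ▸ hA.symm)
  have hvw' : v ≠ w := fun h => hnuw (h ▸ hA)
  obtain ⟨h, hcol, hadj, hinj, hdisj⟩ := amalg G red hG.2.2.1 H redH hmin u w huw'
  have Auv : G.Adj (h u) (h v) :=
    (hadj u v (fun hc => hvw' hc.2) (fun hc => huw' hc.1)).mpr hA
  have Avw : ¬ G.Adj (h v) (h w) := fun hc =>
    hnvw ((hadj v w (fun hc => hvu hc.1) (fun hc => hvw' hc.1)).mp hc)
  have hhvw : h v ≠ h w := fun hc => hvw' (hinj hvu (Ne.symm huw') hc)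
  rcases hdisj with heq | ⟨hne, hflip⟩
  · exact Avw (heq ▸ Auv).symm
  · have Auw : G.Adj (h u) (h w) := hflip.mpr hnuw
    have goal : G.Adj (h w) (h v) := by
      by_cases hr : redH u
      · exact hG.2.2.2.1 (h w) ((hcol w).mpr (huw.mp hr)) (h u) ((hcol u).mpr hr)
          (h v) ((hcol v).mpr (huv.mp hr)) Auw.symm Auv (Ne.symm hhvw)
      · exact hG.2.2.2.2 (h w) (fun hc => hr (huw.mpr ((hcol w).mp hc)))
          (h u) (fun hc => hr ((hcol u).mp hc))
          (h v) (fun hc => hr (huv.mpr ((hcol v).mp hc))) Auw.symm Auv (Ne.symm hhvw)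
    exact Avw goal.symm

/-- Two adjacent same-colored vertices `p, q` which are part of a same-colored triangle
with `x` must be twins in `H`. -/
lemma twins_aux (hG : IsCUH G red) (hmin : MinOmitted G red H redH)
    (p q x r : W) (hpq : redH p ↔ redH q) (hpx : redH p ↔ redH x)
    (hApq : H.Adj p q) (hxp : x ≠ p) (hxq : x ≠ q)
    (hApx : H.Adj p x) (hAqx : H.Adj q x)
    (hrp : r ≠ p) (hrq : r ≠ q) (hApr : H.Adj p r) (hnqr : ¬ H.Adj q r) : False := by
  have hpq' : p ≠ q := H.ne_of_adj hApq
  obtain ⟨h, hcol, hadj, hinj, hdisj⟩ := amalg G red hG.2.2.1 H redH hmin p q hpq'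
  rcases hdisj with heq | ⟨hne, hflip⟩
  · have Apr : G.Adj (h p) (h r) :=
      (hadj p r (fun hc => hrq hc.2) (fun hc => hpq' hc.1)).mpr hApr
    have Aqr : ¬ G.Adj (h q) (h r) := fun hc =>
      hnqr ((hadj q r (fun hc => hpq' hc.1.symm) (fun hc => hrp hc.2)).mp hc)
    exact Aqr (heq ▸ Apr)
  · have hnApq : ¬ G.Adj (h p) (h q) := fun hc => (hflip.mp hc) hApq
    have Apx : G.Adj (h p) (h x) :=
      (hadj p x (fun hc => hxq hc.2) (fun hc => hpq' hc.1)).mpr hApx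
    have Aqx : G.Adj (h q) (h x) :=
      (hadj q x (fun hc => hpq' hc.1.symm) (fun hc => hxp hc.2)).mpr hAqx
    have goal : G.Adj (h p) (h q) := by
      by_cases hr : redH p
      · exact hG.2.2.2.1 (h p) ((hcol p).mpr hr) (h x) ((hcol x).mpr (hpx.mp hr))
          (h q) ((hcol q).mpr (hpq.mp hr)) Apx Aqx.symm hne
      · exact hG.2.2.2.2 (h p) (fun hc => hr ((hcol p).mp hc))
          (h x) (fun hc => hr (hpx.mpr ((hcol x).mp hc)))
          (h q) (fun hc => hr (hpq.mpr ((hcol q).mp hc))) Apx Aqx.symm hne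
    exact hnApq goal

/-- The master lemma: a color class of a minimally omitted non-monochromatic `H` is good. -/
lemma good_of_class (hG : IsCUH G red) (hmin : MinOmitted G red H redH)
    (C : Set W) (hsame : ∀ x ∈ C, ∀ y ∈ C, (redH x ↔ redH y))
    (hout : ∃ z, ∀ x ∈ C, ¬ (redH z ↔ redH x))
    (hne : C.Nonempty) : GoodClass H C := by
  classical
  by_cases hE : ∃ u ∈ C, ∃ v ∈ C, H.Adj u v
  · obtain ⟨u, hu, v, hv, hA⟩ := hE
    have huv : u ≠ v := H.ne_of_adj hA
    obtain ⟨zo, hzo⟩ := hout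
    have htrans : ∀ x ∈ C, ∀ y ∈ C, ∀ z ∈ C, H.Adj x y → H.Adj y z → x ≠ z → H.Adj x z :=
      fun x hx y hy z hz h1 h2 hxz =>
        class_trans hG hmin x y z (hsame x hx y hy) (hsame y hy z hz) ⟨zo, hzo x hx⟩ h1 h2 hxz
    have hclique : ∀ a ∈ C, ∀ b ∈ C, a ≠ b → H.Adj a b := by
      intro a ha b hb hab
      by_contra hnab
      -- a vertex of C in the clique of u and v:
      have inCl : ∀ t ∈ C, (t = u ∨ t = v ∨ H.Adj t u) → t ≠ u → H.Adj t u := by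
        intro t ht hPt htu
        rcases hPt with rfl | rfl | h
        · exact absurd rfl htu
        · exact hA.symm
        · exact h
      -- if some vertex of C is outside the clique of u and v, contradiction:
      have kill : ∀ t ∈ C, ¬ (t = u ∨ t = v ∨ H.Adj t u) → False := by
        intro t ht hPt
        push_neg at hPt
        obtain ⟨htu, htv, hntu⟩ := hPt
        have hntv : ¬ H.Adj t v := fun hc => hntu (htrans t ht v hv u hu hc hA.symm htu)
        exact no_edge_plus_point hG hmin u v t (hsame u hu v hv) (hsame u hu t ht) hA
          (fun hc => hntu hc.symm) (fun hc => hntv hc.symm)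
      by_cases hPa : a = u ∨ a = v ∨ H.Adj a u
      · by_cases hPb : b = u ∨ b = v ∨ H.Adj b u
        · -- both in the clique of u and v, hence adjacent
          by_cases hau : a = u
          · subst hau
            exact hnab (inCl b hb hPb (Ne.symm hab)).symm
          · by_cases hbu : b = u
            · subst hbu
              exact hnab (inCl a ha hPa hab)
            · exact hnab (htrans a ha u hu b hb (inCl a ha hPa hau)
                (inCl b hb hPb hbu).symm hab)
        · exact kill b hb hPb
      · exact kill a ha hPa
    have hcard2 : 2 ≤ Nat.card C := by
      rw [Nat.card_coe_set_eq]
      calc 2 = ({u, v} : Set W).ncard := (Set.ncard_pair huv).symm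
        _ ≤ C.ncard := Set.ncard_le_ncard (by
            intro t ht
            rcases ht with rfl | rfl
            · exact hu
            · exact hv) C.toFinite
    by_cases hc3 : 3 ≤ Nat.card C
    · left
      refine ⟨hc3, hclique, ?_⟩
      intro p hp q hq r hrp hrq
      by_cases hpqeq : p = q
      · rw [hpqeq]
      have hApq : H.Adj p q := hclique p hp q hq hpqeq
      have hx : ∃ x ∈ C, x ≠ p ∧ x ≠ q := by
        by_contra hx
        push_neg at hx
        have hsub : C ⊆ {p, q} := by
          intro t ht
          by_cases htp : t = p
          · exact Or.inl htp
          · exact Or.inr (hx t ht htp)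
        have : Nat.card C ≤ 2 := by
          rw [Nat.card_coe_set_eq]
          calc C.ncard ≤ ({p, q} : Set W).ncard := Set.ncard_le_ncard hsub (Set.toFinite _)
            _ ≤ 2 := (Set.ncard_insert_le _ _).trans (by simp)
        omega
      obtain ⟨x, hxC, hxp, hxq⟩ := hx
      have hApx : H.Adj p x := hclique p hp x hxC (Ne.symm hxp)
      have hAqx : H.Adj q x := hclique q hq x hxC (Ne.symm hxq)
      constructor
      · intro hApr
        by_contra hnqr
        exact twins_aux hG hmin p q x r (hsame p hp q hq) (hsame p hp x hxC)
          hApq hxp hxq hApx hAqx hrp hrq hApr hnqr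
      · intro hAqr
        by_contra hnpr
        exact twins_aux hG hmin q p x r (hsame q hq p hp) (hsame q hq x hxC)
          hApq.symm hxq hxp hAqx hApx hrq hrp hAqr hnpr
    · right; left
      exact ⟨by omega, hclique⟩
  · right; right
    push_neg at hE
    exact ⟨hne, fun a ha b hb hab => hE a ha b hb hab⟩

end Aux2

/-- the color classes of a non-monochromatic minimally omitted subgraph of a
CUH graph are of one of the three shapes above. -/
theorem stmt_2 {V W : Type} [Fintype W] (G : SimpleGraph V) (red : V → Prop)
    (hG : IsCUH G red) (H : SimpleGraph W) (redH : W → Prop)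
    (hmin : MinOmitted G red H redH)
    (h1 : ∃ w, redH w) (h2 : ∃ w, ¬ redH w) :
    GoodClass H {w | redH w} ∧ GoodClass H {w | ¬ redH w} := by
  obtain ⟨zr, hzr⟩ := h1
  obtain ⟨zb, hzb⟩ := h2
  constructor
  · exact good_of_class hG hmin {w | redH w}
      (fun x hx y hy => iff_of_true hx hy)
      ⟨zb, fun x hx hiff => hzb (hiff.mpr hx)⟩
      ⟨zr, hzr⟩
  · exact good_of_class hG hmin {w | ¬ redH w}
      (fun x hx y hy => iff_of_false hx hy)
      ⟨zr, fun x hx hiff => hx (hiff.mp hzr)⟩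
      ⟨zb, hzb⟩
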